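/- arXiv:2207.07948 — 4 statements merged into one kernel-verified Lean document; each statement's English description precedes it below -/
import Mathlib

section
/- Let t ≥ 1, let K ∈ ℝ^{t×t} be symmetric, b ∈ ℝ^t and c ∈ ℝ be such that the block matrix [[K, b], [bᵀ, c]] is positive semidefinite, and let λ > 0. Then bᵀ (K + λ I_t)⁻² b ≤ λ⁻¹ (c − bᵀ (K + λ I_t)⁻¹ b). Equivalently, ‖(K + λI_t)⁻¹ b‖₂ ≤ σ/√λ, where σ² = c − bᵀ(K + λI_t)⁻¹b is the posterior variance. -/
open Matrix

/-- If the block matrix `[[K, b], [bᵀ, c]]` is positive semidefinite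
(`K` symmetric `t × t`), and `λ > 0`, then
`bᵀ (K + λ I)⁻² b ≤ λ⁻¹ (c − bᵀ (K + λ I)⁻¹ b)`. -/
theorem posterior_mean_noise_coefficient_bound
    {t : ℕ} (ht : 1 ≤ t)
    (K : Matrix (Fin t) (Fin t) ℝ) (hK : K.IsSymm)
    (b : Fin t → ℝ) (c : ℝ)
    (hpsd : (Matrix.fromBlocks K (Matrix.replicateCol (Fin 1) b)
        (Matrix.replicateRow (Fin 1) b) (Matrix.of fun _ _ => c)).PosSemidef)
    (lam : ℝ) (hlam : 0 < lam) :
    b ⬝ᵥ (((K + lam • (1 : Matrix (Fin t) (Fin t) ℝ))⁻¹ *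
        (K + lam • (1 : Matrix (Fin t) (Fin t) ℝ))⁻¹) *ᵥ b) ≤
      lam⁻¹ * (c - b ⬝ᵥ ((K + lam • (1 : Matrix (Fin t) (Fin t) ℝ))⁻¹ *ᵥ b)) := by
  set A : Matrix (Fin t) (Fin t) ℝ := K + lam • (1 : Matrix (Fin t) (Fin t) ℝ) with hAdef
  have hKherm : K.IsHermitian := by
    rw [Matrix.IsHermitian, Matrix.conjTranspose_eq_transpose_of_trivial]
    exact hK
  have hKpsd : K.PosSemidef := by
    refine Matrix.PosSemidef.of_dotProduct_mulVec_nonneg hKherm fun x => ?_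
    have h := hpsd.dotProduct_mulVec_nonneg (Sum.elim x 0)
    simpa [Matrix.fromBlocks_mulVec, sumElim_dotProduct_sumElim,
      Matrix.mulVec, dotProduct] using h
  have hsmul : (lam • (1 : Matrix (Fin t) (Fin t) ℝ)).PosDef := by
    refine Matrix.PosDef.of_dotProduct_mulVec_pos ?_ fun x hx => ?_
    · rw [Matrix.IsHermitian, Matrix.conjTranspose_eq_transpose_of_trivial]
      simp [Matrix.transpose_smul]
    · have hx2 : 0 < x ⬝ᵥ x := by
        have := dotProduct_star_self_pos_iff (v := x) |>.2 hx
        simpa using this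
      simpa [Matrix.smul_mulVec, dotProduct_smul] using mul_pos hlam hx2
  have hApd : A.PosDef := Matrix.PosDef.posSemidef_add hKpsd hsmul
  have hAunit : IsUnit A := hApd.isUnit
  have hAinv : A * A⁻¹ = 1 := Matrix.mul_nonsing_inv _ (Matrix.isUnit_iff_isUnit_det _ |>.1 hAunit)
  have hAsymm : Aᵀ = A := by
    rw [hAdef, Matrix.transpose_add, hK, Matrix.transpose_smul, Matrix.transpose_one]
  set v : Fin t → ℝ := A⁻¹ *ᵥ b with hvdef
  have hb : A *ᵥ v = b := by
    rw [hvdef, Matrix.mulVec_mulVec, hAinv, Matrix.one_mulVec]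
  have hbv : b ⬝ᵥ v = v ⬝ᵥ (K *ᵥ v) + lam * (v ⬝ᵥ v) := by
    rw [dotProduct_comm, ← hb, hAdef]
    simp [Matrix.add_mulVec, Matrix.smul_mulVec, dotProduct_add,
      dotProduct_smul, smul_eq_mul]
  have hAinvsymm : A⁻¹ᵀ = A⁻¹ := by rw [Matrix.transpose_nonsing_inv, hAsymm]
  have hlhs : b ⬝ᵥ ((A⁻¹ * A⁻¹) *ᵥ b) = v ⬝ᵥ v := by
    rw [← Matrix.mulVec_mulVec, Matrix.dotProduct_mulVec,
      ← Matrix.mulVec_transpose, hAinvsymm]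
  have h2 : (0:ℝ) ≤ v ⬝ᵥ (K *ᵥ v) - v ⬝ᵥ b - b ⬝ᵥ v + c := by
    have h := hpsd.dotProduct_mulVec_nonneg (Sum.elim v fun _ => (-1 : ℝ))
    simp [Matrix.fromBlocks_mulVec, sumElim_dotProduct_sumElim,
      Matrix.mulVec, dotProduct, Matrix.replicateCol_apply, Matrix.replicateRow_apply, Function.comp,
      Matrix.of_apply, Fin.sum_univ_one, sub_eq_add_neg, mul_add, mul_neg, Finset.sum_add_distrib, Finset.sum_neg_distrib] at h ⊢
    ring_nf at h ⊢
    linarith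
  have hkey : (0:ℝ) ≤ v ⬝ᵥ (K *ᵥ v) - 2 * (b ⬝ᵥ v) + c := by
    have hcomm : v ⬝ᵥ b = b ⬝ᵥ v := dotProduct_comm _ _
    linarith [h2, hcomm]
  rw [hlhs, hbv]
  have h3 : lam * (v ⬝ᵥ v) ≤ c - (v ⬝ᵥ (K *ᵥ v) + lam * (v ⬝ᵥ v)) := by
    rw [hbv] at hkey; linarith
  calc v ⬝ᵥ v = lam⁻¹ * (lam * (v ⬝ᵥ v)) := by field_simp
    _ ≤ lam⁻¹ * (c - (v ⬝ᵥ (K *ᵥ v) + lam * (v ⬝ᵥ v))) :=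
        mul_le_mul_of_nonneg_left h3 (inv_nonneg.2 hlam.le)
end

section
/- Let k be a positive semidefinite kernel on a set X, let x_1, …, x_t ∈ X, and let λ > 0. For 1 ≤ s ≤ t let K_s = [k(x_i,x_j)]_{i,j=1}^s and let σ²_{s−1}(x_s) = k(x_s,x_s) − k_{s−1}(x_s)ᵀ (K_{s−1} + λ I_{s−1})⁻¹ k_{s−1}(x_s), where k_{s−1}(x) = (k(x_1,x),…,k(x_{s−1},x))ᵀ and σ_0²(x) = k(x,x). Then det(I_t + λ⁻¹ K_t) = ∏_{s=1}^t (1 + λ⁻¹ σ²_{s−1}(x_s)). -/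
open Matrix

/-- Gram matrix of the first `s` points `x 0, …, x (s-1)` under the kernel `k`. -/
noncomputable def gramMatrix {X : Type*} (k : X → X → ℝ) (x : ℕ → X) (s : ℕ) :
    Matrix (Fin s) (Fin s) ℝ :=
  Matrix.of fun i j => k (x i) (x j)

/-- Gaussian-process posterior variance at `y` after conditioning on the first `s`
points `x 0, …, x (s-1)`, with regularization `λ`:
`σ_s²(y) = k(y,y) − k_s(y)ᵀ (K_s + λ I_s)⁻¹ k_s(y)` (and `σ_0²(y) = k(y,y)`). -/
noncomputable def postVar {X : Type*} (k : X → X → ℝ) (x : ℕ → X) (lam : ℝ)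
    (s : ℕ) (y : X) : ℝ :=
  k y y - (fun i : Fin s => k (x i) y) ⬝ᵥ
    ((gramMatrix k x s + lam • (1 : Matrix (Fin s) (Fin s) ℝ))⁻¹ *ᵥ
      fun i : Fin s => k (x i) y)

lemma posDef_M {X : Type*} (k : X → X → ℝ)
    (hpsd : ∀ (n : ℕ) (v : Fin n → X),
      (Matrix.of fun i j => k (v i) (v j) : Matrix (Fin n) (Fin n) ℝ).PosSemidef)
    (x : ℕ → X) (s : ℕ) {lam : ℝ} (hlam : 0 < lam) :
    (gramMatrix k x s + lam • (1 : Matrix (Fin s) (Fin s) ℝ)).PosDef := by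
  refine Matrix.PosDef.posSemidef_add (hpsd s fun i => x i) ?_
  rw [smul_one_eq_diagonal]
  exact posDef_diagonal_iff.2 fun _ => hlam

lemma ksymm {X : Type*} (k : X → X → ℝ)
    (hpsd : ∀ (n : ℕ) (v : Fin n → X),
      (Matrix.of fun i j => k (v i) (v j) : Matrix (Fin n) (Fin n) ℝ).PosSemidef)
    (a b : X) : k a b = k b a := by
  have h := congrFun (congrFun ((hpsd 2 ![a, b]).1) 1) 0
  simpa using h

lemma det_step {X : Type*} (k : X → X → ℝ)
    (hpsd : ∀ (n : ℕ) (v : Fin n → X),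
      (Matrix.of fun i j => k (v i) (v j) : Matrix (Fin n) (Fin n) ℝ).PosSemidef)
    (x : ℕ → X) (s : ℕ) {lam : ℝ} (hlam : 0 < lam) :
    (gramMatrix k x (s+1) + lam • (1 : Matrix (Fin (s+1)) (Fin (s+1)) ℝ)).det =
      (gramMatrix k x s + lam • (1 : Matrix (Fin s) (Fin s) ℝ)).det *
        (lam + postVar k x lam s (x s)) := by
  set A := gramMatrix k x s + lam • (1 : Matrix (Fin s) (Fin s) ℝ) with hA
  set v : Fin s → ℝ := fun i => k (x i) (x s) with hv
  set B : Matrix (Fin s) (Fin 1) ℝ := Matrix.of fun i _ => v i with hB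
  set C : Matrix (Fin 1) (Fin s) ℝ := Matrix.of fun _ j => v j with hC
  set D : Matrix (Fin 1) (Fin 1) ℝ := Matrix.of fun _ _ => k (x s) (x s) + lam with hD
  set M := gramMatrix k x (s+1) + lam • (1 : Matrix (Fin (s+1)) (Fin (s+1)) ℝ) with hM
  have hre : fromBlocks A B C D = M.submatrix finSumFinEquiv finSumFinEquiv := by
    ext i j
    cases i with
    | inl a =>
      cases j with
      | inl b =>
        simp [hM, fromBlocks, hA, gramMatrix, Matrix.one_apply, Fin.ext_iff]
      | inr b =>
        have hb : b = 0 := Subsingleton.elim _ _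
        subst hb
        simp [hM, fromBlocks, hB, hv, gramMatrix, Matrix.one_apply, Fin.ext_iff,
          Nat.ne_of_lt a.isLt]
    | inr a =>
      have ha : a = 0 := Subsingleton.elim _ _
      subst ha
      cases j with
      | inl b =>
        simp [hM, fromBlocks, hC, hv, gramMatrix, Matrix.one_apply, Fin.ext_iff,
          (Nat.ne_of_lt b.isLt).symm, ksymm k hpsd]
      | inr b =>
        have hb : b = 0 := Subsingleton.elim _ _
        subst hb
        simp [hM, fromBlocks, hD, gramMatrix, Matrix.one_apply]
  have hAdef := posDef_M k hpsd x s hlam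
  haveI : Invertible A := hAdef.isUnit.invertible
  have hdet : M.det = (fromBlocks A B C D).det := by
    rw [hre, det_submatrix_equiv_self]
  rw [hdet, det_fromBlocks₁₁]
  congr 1
  rw [det_fin_one, invOf_eq_nonsing_inv]
  have hcab : (C * A⁻¹ * B) 0 0 = v ⬝ᵥ (A⁻¹ *ᵥ v) := by
    rw [Matrix.mul_assoc]
    simp [Matrix.mul_apply, mulVec, dotProduct, hB, hC]
  have hpv : postVar k x lam s (x s) = k (x s) (x s) - v ⬝ᵥ (A⁻¹ *ᵥ v) := rfl
  rw [Matrix.sub_apply, hcab, hpv]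
  simp [hD]
  ring

/-- For a positive semidefinite kernel `k`, points `x_1, …, x_t` and
`λ > 0`, `det(I_t + λ⁻¹ K_t) = ∏_{s=1}^t (1 + λ⁻¹ σ²_{s−1}(x_s))`. -/
theorem det_eq_prod_posterior_variances
    {X : Type*} (k : X → X → ℝ)
    (hpsd : ∀ (n : ℕ) (v : Fin n → X),
      (Matrix.of fun i j => k (v i) (v j) : Matrix (Fin n) (Fin n) ℝ).PosSemidef)
    (x : ℕ → X) (t : ℕ) (lam : ℝ) (hlam : 0 < lam) :
    ((1 : Matrix (Fin t) (Fin t) ℝ) + lam⁻¹ • gramMatrix k x t).det =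
      ∏ s ∈ Finset.range t, (1 + lam⁻¹ * postVar k x lam s (x s)) := by
  have key : ∀ n, (gramMatrix k x n + lam • (1 : Matrix (Fin n) (Fin n) ℝ)).det =
      ∏ s ∈ Finset.range n, (lam + postVar k x lam s (x s)) := by
    intro n
    induction n with
    | zero => simp [Matrix.det_fin_zero]
    | succ n ih => rw [det_step k hpsd x n hlam, ih, Finset.prod_range_succ]
  have h1 : (1 : Matrix (Fin t) (Fin t) ℝ) + lam⁻¹ • gramMatrix k x t
      = lam⁻¹ • (gramMatrix k x t + lam • 1) := by
    rw [smul_add, smul_smul, inv_mul_cancel₀ hlam.ne', one_smul, add_comm]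
  rw [h1, det_smul, key, Fintype.card_fin]
  calc lam⁻¹ ^ t * ∏ s ∈ Finset.range t, (lam + postVar k x lam s (x s))
      = ∏ s ∈ Finset.range t, lam⁻¹ * (lam + postVar k x lam s (x s)) := by
        rw [Finset.prod_mul_distrib, Finset.prod_const, Finset.card_range]
    _ = ∏ s ∈ Finset.range t, (1 + lam⁻¹ * postVar k x lam s (x s)) := by
        refine Finset.prod_congr rfl fun s _ => ?_
        rw [mul_add, inv_mul_cancel₀ hlam.ne']
end

section
/- Let k be a positive semidefinite kernel on a set X, let λ > 0, and let x_1, …, x_t ∈ X be chosen by maximum-variance sampling: for each s = 1,…,t, σ_{s−1}(x_s) ≥ σ_{s−1}(x) for every x ∈ X, where σ_s²(x) = k(x,x) − k_s(x)ᵀ(K_s + λI_s)⁻¹ k_s(x) is the posterior variance after the first s points (σ_0²(x) = k(x,x)). Then for every x ∈ X, t · σ_t²(x) ≤ Σ_{s=1}^t σ²_{s−1}(x_s). -/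
open Matrix

/-- Variational lower bound for the quadratic form `b ⬝ A⁻¹ b` with `A` positive
definite: for every `w`, `2⟨w,b⟩ − ⟨w, A w⟩ ≤ ⟨b, A⁻¹ b⟩`. -/
lemma quad_var_bound {n : ℕ} (A : Matrix (Fin n) (Fin n) ℝ) (hA : A.PosDef)
    (b w : Fin n → ℝ) :
    2 * (w ⬝ᵥ b) - w ⬝ᵥ (A *ᵥ w) ≤ b ⬝ᵥ (A⁻¹ *ᵥ b) := by
  set u : Fin n → ℝ := A⁻¹ *ᵥ b with hu
  have hdet : IsUnit A.det := isUnit_iff_ne_zero.mpr hA.det_pos.ne'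
  have hAu : A *ᵥ u = b := by
    rw [hu, Matrix.mulVec_mulVec, Matrix.mul_nonsing_inv _ hdet, Matrix.one_mulVec]
  have hsymm : Aᵀ = A := by
    rw [← Matrix.conjTranspose_eq_transpose_of_trivial]; exact hA.isHermitian
  have h1 : u ⬝ᵥ (A *ᵥ w) = b ⬝ᵥ w := by
    rw [Matrix.dotProduct_mulVec, ← Matrix.mulVec_transpose, hsymm, hAu]
  have h0 : 0 ≤ (w - u) ⬝ᵥ (A *ᵥ (w - u)) := by
    have := hA.posSemidef.dotProduct_mulVec_nonneg (w - u)
    simpa using this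
  have expand : (w - u) ⬝ᵥ (A *ᵥ (w - u))
      = w ⬝ᵥ (A *ᵥ w) - w ⬝ᵥ (A *ᵥ u) - b ⬝ᵥ w + u ⬝ᵥ (A *ᵥ u) := by
    rw [Matrix.mulVec_sub, dotProduct_sub, sub_dotProduct,
      sub_dotProduct, h1]
    ring
  rw [hAu] at expand
  have h2 : b ⬝ᵥ w = w ⬝ᵥ b := dotProduct_comm _ _
  have h3 : b ⬝ᵥ (A⁻¹ *ᵥ b) = u ⬝ᵥ b := dotProduct_comm _ _
  linarith [h0, expand.symm]

/-- Posterior variance is nonincreasing in the number of conditioning points. -/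
lemma postVar_antitone {X : Type*} (k : X → X → ℝ)
    (hpsd : ∀ (n : ℕ) (v : Fin n → X),
      (Matrix.of fun i j => k (v i) (v j) : Matrix (Fin n) (Fin n) ℝ).PosSemidef)
    (x : ℕ → X) (lam : ℝ) (hlam : 0 < lam) {s t : ℕ} (hst : s ≤ t) (y : X) :
    postVar k x lam t y ≤ postVar k x lam s y := by
  set A : ∀ n : ℕ, Matrix (Fin n) (Fin n) ℝ :=
    fun n => gramMatrix k x n + lam • (1 : Matrix (Fin n) (Fin n) ℝ) with hAdef
  have hApd : ∀ n, (A n).PosDef := by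
    intro n
    refine Matrix.PosDef.posSemidef_add (hpsd n fun i => x i) ?_
    rw [smul_one_eq_diagonal]
    exact Matrix.PosDef.diagonal fun _ => hlam
  set b : ∀ n : ℕ, Fin n → ℝ := fun n i => k (x i) y with hbdef
  set u : Fin s → ℝ := (A s)⁻¹ *ᵥ b s with hu
  set W : ℕ → ℝ := fun m => if h : m < s then u ⟨m, h⟩ else 0 with hW
  have hWz : ∀ m, s ≤ m → W m = 0 := fun m hm => dif_neg (not_lt.mpr hm)
  have hWi : ∀ n : ℕ, ∀ i : Fin n, ∀ h : (i : ℕ) < s, W i = u ⟨i, h⟩ := by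
    intro n i hi
    simp [hW, hi]
  -- the padded weight vector
  have hdot : (fun i : Fin t => W i) ⬝ᵥ b t = u ⬝ᵥ b s := by
    have h1 : (fun i : Fin t => W i) ⬝ᵥ b t
        = ∑ i ∈ Finset.range t, W i * k (x i) y := by
      simp only [dotProduct, hbdef]
      exact Fin.sum_univ_eq_sum_range (fun m => W m * k (x m) y) t
    have h2 : u ⬝ᵥ b s = ∑ i ∈ Finset.range s, W i * k (x i) y := by
      simp only [dotProduct, hbdef]
      rw [← Fin.sum_univ_eq_sum_range (fun m => W m * k (x m) y) s]
      refine Finset.sum_congr rfl fun i _ => ?_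
      rw [hWi s i i.isLt]
    rw [h1, h2]
    exact (Finset.sum_subset (Finset.range_subset_range.mpr hst) (fun i _ hi => by
      rw [hWz i (by simpa using hi)]; ring)).symm
  set g : ℕ → ℕ → ℝ :=
    fun i j => W i * ((k (x i) (x j) + if i = j then lam else 0) * W j) with hg
  have entry : ∀ n : ℕ, ∀ i j : Fin n,
      W i * ((A n) i j * W j) = g i j := by
    intro n i j
    have : (A n) i j = k (x i) (x j) + if (i : ℕ) = (j : ℕ) then lam else 0 := by
      simp [hAdef, gramMatrix, Matrix.add_apply, Matrix.smul_apply,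
        Matrix.one_apply, Fin.ext_iff, mul_ite]
    rw [this, hg]
  have hquad : ∀ n : ℕ, (fun i : Fin n => W i) ⬝ᵥ ((A n) *ᵥ fun i : Fin n => W i)
      = ∑ i ∈ Finset.range n, ∑ j ∈ Finset.range n, g i j := by
    intro n
    simp only [dotProduct, Matrix.mulVec]
    rw [← Fin.sum_univ_eq_sum_range (fun i => ∑ j ∈ Finset.range n, g i j) n]
    refine Finset.sum_congr rfl fun i _ => ?_
    rw [Finset.mul_sum, ← Fin.sum_univ_eq_sum_range (fun j => g i j) n]
    refine Finset.sum_congr rfl fun j _ => ?_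
    rw [← entry n i j]
  have gz : ∀ i j : ℕ, s ≤ i ∨ s ≤ j → g i j = 0 := by
    intro i j hij
    rcases hij with h | h
    · simp only [hg, hWz i h, zero_mul]
    · simp only [hg, hWz j h, mul_zero]
  have hq : (fun i : Fin t => W i) ⬝ᵥ ((A t) *ᵥ fun i : Fin t => W i)
      = u ⬝ᵥ ((A s) *ᵥ u) := by
    have huW : u = fun i : Fin s => W i := funext fun i => (hWi s i i.isLt).symm
    rw [hquad t, huW, hquad s]
    rw [← Finset.sum_subset (Finset.range_subset_range.mpr hst) (fun i _ hi => by
      refine Finset.sum_eq_zero fun j _ => gz i j (Or.inl (by simpa using hi)))]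
    refine Finset.sum_congr rfl fun i hi => ?_
    exact (Finset.sum_subset (Finset.range_subset_range.mpr hst) (fun j _ hj =>
      gz i j (Or.inr (by simpa using hj)))).symm
  -- A s *ᵥ u = b s
  have hdet : IsUnit (A s).det := isUnit_iff_ne_zero.mpr (hApd s).det_pos.ne'
  have hAu : (A s) *ᵥ u = b s := by
    rw [hu, Matrix.mulVec_mulVec, Matrix.mul_nonsing_inv _ hdet, Matrix.one_mulVec]
  have hvar := quad_var_bound (A t) (hApd t) (b t) (fun i : Fin t => W i)
  rw [hdot, hq, hAu] at hvar
  have hub : u ⬝ᵥ b s = b s ⬝ᵥ ((A s)⁻¹ *ᵥ b s) := by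
    rw [hu]; exact dotProduct_comm _ _
  have hfinal : b s ⬝ᵥ ((A s)⁻¹ *ᵥ b s) ≤ b t ⬝ᵥ ((A t)⁻¹ *ᵥ b t) := by
    linarith [hvar, hub]
  show k y y - b t ⬝ᵥ ((A t)⁻¹ *ᵥ b t) ≤ k y y - b s ⬝ᵥ ((A s)⁻¹ *ᵥ b s)
  linarith

/-- If the points `x_1, …, x_t` are chosen by maximum-variance
sampling (`σ²_{s−1}(x_s) ≥ σ²_{s−1}(y)` for every `y` and every `s ≤ t`; equivalent
to `σ_{s−1}(x_s) ≥ σ_{s−1}(y)` since posterior standard deviations are nonnegative),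
then for every `y`, `t · σ_t²(y) ≤ Σ_{s=1}^t σ²_{s−1}(x_s)`. -/
theorem max_variance_sampling_final_variance_bound
    {X : Type*} (k : X → X → ℝ)
    (hpsd : ∀ (n : ℕ) (v : Fin n → X),
      (Matrix.of fun i j => k (v i) (v j) : Matrix (Fin n) (Fin n) ℝ).PosSemidef)
    (x : ℕ → X) (t : ℕ) (lam : ℝ) (hlam : 0 < lam)
    (hmaxvar : ∀ s < t, ∀ y : X, postVar k x lam s y ≤ postVar k x lam s (x s)) :
    ∀ y : X, (t : ℝ) * postVar k x lam t y ≤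
      ∑ s ∈ Finset.range t, postVar k x lam s (x s) := by
  intro y
  have h1 : (t : ℝ) * postVar k x lam t y
      = ∑ _s ∈ Finset.range t, postVar k x lam t y := by
    rw [Finset.sum_const, Finset.card_range, nsmul_eq_mul]
  rw [h1]
  refine Finset.sum_le_sum fun s hs => ?_
  have hst := Finset.mem_range.mp hs
  exact le_trans (postVar_antitone k hpsd x lam hlam hst.le y) (hmaxvar s hst y)
end

section
/- Let k be a positive semidefinite kernel on a set X with k(x,x) ≤ 1 for all x, let x_1, …, x_t ∈ X, and let λ > 0. Let σ_s²(x) = k(x,x) − k_s(x)ᵀ(K_s + λI_s)⁻¹ k_s(x) denote the posterior variance after the first s points. Then Σ_{j=1}^t σ_t²(x_j) ≤ (1 / log(1 + λ⁻¹)) · log det(I_t + λ⁻¹ K_t), where K_t = [k(x_i,x_j)]_{i,j=1}^t; i.e., the sum of the final posterior variances at the queried points is bounded by the cumulative sequential posterior variances and hence by a constant multiple of the information gain. -/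
open Matrix

/-- Scalar inequality: `λ μ/(μ+λ) ≤ log(1+μ/λ)/log(1+1/λ)` for `μ ≥ 0`, `λ > 0`. -/
lemma key_scalar {lam : ℝ} (hlam : 0 < lam) {μ : ℝ} (hμ : 0 ≤ μ) :
    lam * (μ / (μ + lam)) ≤ (1 / Real.log (1 + lam⁻¹)) * Real.log (1 + lam⁻¹ * μ) := by
  have hinv : 0 < lam⁻¹ := inv_pos.mpr hlam
  have hL : 0 < Real.log (1 + lam⁻¹) := Real.log_pos (by linarith)
  have hlamL : lam ≤ 1 / Real.log (1 + lam⁻¹) := by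
    rw [le_div_iff₀ hL]
    have h1 := Real.log_le_sub_one_of_pos (show (0:ℝ) < 1 + lam⁻¹ by linarith)
    have h2 : lam * lam⁻¹ = 1 := mul_inv_cancel₀ hlam.ne'
    nlinarith
  have ha : 0 ≤ lam⁻¹ * μ := by positivity
  have h1a : (0:ℝ) < 1 + lam⁻¹ * μ := by linarith
  have hlog : (lam⁻¹ * μ) / (1 + lam⁻¹ * μ) ≤ Real.log (1 + lam⁻¹ * μ) := by
    have h := Real.log_le_sub_one_of_pos (show (0:ℝ) < (1 + lam⁻¹ * μ)⁻¹ by positivity)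
    rw [Real.log_inv] at h
    have h2 : 1 - (1 + lam⁻¹ * μ)⁻¹ ≤ Real.log (1 + lam⁻¹ * μ) := by linarith
    have h3 : (lam⁻¹ * μ) / (1 + lam⁻¹ * μ) = 1 - (1 + lam⁻¹ * μ)⁻¹ := by
      field_simp
      ring
    linarith
  have heq : μ / (μ + lam) = (lam⁻¹ * μ) / (1 + lam⁻¹ * μ) := by
    have h0 : μ + lam ≠ 0 := by positivity
    rw [div_eq_div_iff h0 h1a.ne']
    linear_combination (-μ) * inv_mul_cancel₀ hlam.ne'
  rw [heq]
  exact mul_le_mul hlamL hlog (by positivity) (by positivity)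

/-- For a positive semidefinite kernel with `k(x,x) ≤ 1`, points
`x_1, …, x_t` and `λ > 0`, the sum of the final posterior variances at the queried
points satisfies `Σ_{j=1}^t σ_t²(x_j) ≤ (1 / log(1 + λ⁻¹)) · log det(I_t + λ⁻¹ K_t)`. -/
theorem sum_final_posterior_variances_le_information_gain
    {X : Type*} (k : X → X → ℝ)
    (hpsd : ∀ (n : ℕ) (v : Fin n → X),
      (Matrix.of fun i j => k (v i) (v j) : Matrix (Fin n) (Fin n) ℝ).PosSemidef)
    (hbound : ∀ y : X, k y y ≤ 1)
    (x : ℕ → X) (t : ℕ) (lam : ℝ) (hlam : 0 < lam) :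
    ∑ j ∈ Finset.range t, postVar k x lam t (x j) ≤
      (1 / Real.log (1 + lam⁻¹)) *
        Real.log ((1 : Matrix (Fin t) (Fin t) ℝ) + lam⁻¹ • gramMatrix k x t).det := by
  classical
  set K : Matrix (Fin t) (Fin t) ℝ := gramMatrix k x t with hKdef
  have hK : K.PosSemidef := hpsd t (fun i => x i)
  have hH : K.IsHermitian := hK.1
  have hent : ∀ i j : Fin t, K i j = k (x i) (x j) := fun _ _ => rfl
  have hsym : ∀ i j : Fin t, k (x i) (x j) = k (x j) (x i) := by
    intro i j
    have := congrFun (congrFun hH j) i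
    simpa [conjTranspose_apply, hent] using this
  -- the smul identity
  have hsm : lam • (1 : Matrix (Fin t) (Fin t) ℝ) = diagonal (fun _ => lam) := by
    ext i j
    by_cases h : i = j <;> simp [h, Matrix.one_apply]
  have hsmuldiag : ∀ (c : ℝ) (d : Fin t → ℝ),
      c • diagonal d = diagonal (fun i => c * d i) := by
    intro c d
    ext i j
    by_cases h : i = j <;> simp [h]
  set B : Matrix (Fin t) (Fin t) ℝ := K + lam • (1 : Matrix (Fin t) (Fin t) ℝ) with hBdef
  have hB : B.PosDef := PosDef.posSemidef_add hK (by rw [hsm]; exact PosDef.diagonal fun _ => hlam)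
  have hdetB : IsUnit B.det := isUnit_iff_ne_zero.mpr hB.det_pos.ne'
  have hBBinv : B * B⁻¹ = 1 := mul_nonsing_inv B hdetB
  have hBinvB : B⁻¹ * B = 1 := nonsing_inv_mul B hdetB
  -- per-point identity
  have hpost : ∀ j : Fin t, postVar k x lam t (x j) = lam * (K * B⁻¹) j j := by
    intro j
    have hc : (fun i : Fin t => k (x i) (x (j : ℕ))) ⬝ᵥ
        (B⁻¹ *ᵥ fun i : Fin t => k (x i) (x (j : ℕ))) = (K * B⁻¹ * K) j j := by
      simp only [Matrix.mul_apply, dotProduct, Matrix.mulVec, Finset.sum_mul,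
        Finset.mul_sum]
      rw [Finset.sum_comm]
      refine Finset.sum_congr rfl fun i _ => Finset.sum_congr rfl fun l _ => ?_
      simp only [hent, hsym i j, hsym l j]
      ring
    have hid : K * B⁻¹ * K + lam • (K * B⁻¹) = K := by
      have h1 : K * B⁻¹ * B = K := by rw [mul_assoc, hBinvB, mul_one]
      calc K * B⁻¹ * K + lam • (K * B⁻¹) = K * B⁻¹ * (K + lam • 1) := by
            rw [mul_add, Matrix.mul_smul, mul_one]
        _ = K := h1
    have h2 : (K * B⁻¹ * K) j j = K j j - lam * (K * B⁻¹) j j := by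
      have := congrFun (congrFun hid j) j
      simp only [Matrix.add_apply, Matrix.smul_apply, smul_eq_mul] at this
      linarith
    show k (x (j : ℕ)) (x (j : ℕ)) - _ = _
    rw [hc, h2, ← hent j j]
    ring
  rw [← Fin.sum_univ_eq_sum_range (fun j => postVar k x lam t (x j)) t]
  simp only [hpost]
  -- spectral decomposition
  set U : Matrix (Fin t) (Fin t) ℝ := (hH.eigenvectorUnitary : Matrix (Fin t) (Fin t) ℝ)
    with hUdef
  set μ : Fin t → ℝ := hH.eigenvalues with hμdef
  have hUU : U * star U = 1 := mem_unitaryGroup_iff.mp (hH.eigenvectorUnitary).2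
  have hUU' : star U * U = 1 := mem_unitaryGroup_iff'.mp (hH.eigenvectorUnitary).2
  have hspec : K = U * diagonal μ * star U := by
    have h := hH.spectral_theorem
    simpa [Function.comp] using h
  have hmulprod : ∀ d e : Fin t → ℝ,
      (U * diagonal d * star U) * (U * diagonal e * star U) =
        U * diagonal (fun i => d i * e i) * star U := by
    intro d e
    calc (U * diagonal d * star U) * (U * diagonal e * star U)
        = U * diagonal d * (star U * U) * (diagonal e * star U) := by
          simp only [mul_assoc]
      _ = U * (diagonal d * diagonal e) * star U := by
          rw [hUU', mul_one]; simp only [mul_assoc]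
      _ = U * diagonal (fun i => d i * e i) * star U := by
          rw [diagonal_mul_diagonal]
  have hμnn : ∀ i, 0 ≤ μ i := fun i => hK.eigenvalues_nonneg i
  have hμlam : ∀ i, 0 < μ i + lam := fun i => add_pos_of_nonneg_of_pos (hμnn i) hlam
  have h1 : U * diagonal (fun _ : Fin t => lam) * star U
      = lam • (1 : Matrix (Fin t) (Fin t) ℝ) := by
    rw [← hsm, Matrix.mul_smul, mul_one, Matrix.smul_mul, hUU]
  have hBspec : B = U * diagonal (fun i => μ i + lam) * star U := by
    rw [hBdef, hspec, ← h1, ← Matrix.add_mul, ← Matrix.mul_add, diagonal_add]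
  have hBinvspec : B⁻¹ = U * diagonal (fun i => (μ i + lam)⁻¹) * star U := by
    refine inv_eq_right_inv ?_
    rw [hBspec, hmulprod]
    have : (fun i => (μ i + lam) * (μ i + lam)⁻¹) = fun _ : Fin t => (1 : ℝ) := by
      funext i; exact mul_inv_cancel₀ (hμlam i).ne'
    rw [this, diagonal_one, mul_one, hUU]
  have hKB : K * B⁻¹ = U * diagonal (fun i => μ i * (μ i + lam)⁻¹) * star U := by
    rw [hspec, hBinvspec, hmulprod]
  -- trace computation
  have htrace : ∑ j : Fin t, (K * B⁻¹) j j = ∑ i : Fin t, μ i * (μ i + lam)⁻¹ := by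
    have h1 : ∑ j : Fin t, (K * B⁻¹) j j = (K * B⁻¹).trace := by
      simp [Matrix.trace, Matrix.diag]
    rw [h1, hKB, Matrix.trace_mul_cycle, hUU', one_mul, trace_diagonal]
  -- determinant computation
  have hdetspec : ((1 : Matrix (Fin t) (Fin t) ℝ) + lam⁻¹ • K).det
      = ∏ i : Fin t, (1 + lam⁻¹ * μ i) := by
    have h1 : (1 : Matrix (Fin t) (Fin t) ℝ) + lam⁻¹ • K
        = U * diagonal (fun i => 1 + lam⁻¹ * μ i) * star U := by
      have hone : (1 : Matrix (Fin t) (Fin t) ℝ) = U * diagonal (fun _ => (1:ℝ)) * star U := by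
        rw [diagonal_one, mul_one, hUU]
      have hK2 : U * diagonal (fun i => lam⁻¹ * μ i) * star U = lam⁻¹ • K := by
        rw [← hsmuldiag, Matrix.mul_smul, Matrix.smul_mul, ← hspec]
      rw [hone, ← hK2, ← Matrix.add_mul, ← Matrix.mul_add, diagonal_add]
    rw [h1, Matrix.det_mul_right_comm, hUU, one_mul, det_diagonal]
  rw [hdetspec]
  have hL : 0 < Real.log (1 + lam⁻¹) :=
    Real.log_pos (by have := inv_pos.mpr hlam; linarith)
  rw [Real.log_prod (fun i _ => by
    have := hμnn i; have := inv_pos.mpr hlam; positivity)]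
  rw [← Finset.mul_sum, htrace, Finset.mul_sum, Finset.mul_sum]
  refine Finset.sum_le_sum fun i _ => ?_
  have := key_scalar hlam (hμnn i)
  rw [div_eq_mul_inv] at this
  exact this
end
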